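/- If G and H are guaranteed scoring games with G ⋡ H, then there exists a guaranteed game X such that Ls(G+X) < 0 < Ls(H+X), and there exists a guaranteed game Y such that Rs(G+Y) < 0 < Rs(H+Y). -/

import Mathlib

/-- A scoring game: `la`/`ra` are the atom values (relevant when the
corresponding option list is empty), `L`/`R` the Left and Right options. -/
inductive SG : Type
  | mk (la ra : ℝ) (L R : List SG) : SG

namespace SG

theorem sizeOf_lt_of_mem {g : SG} {l : List SG} (h : g ∈ l) : sizeOf g < sizeOf l :=
  List.sizeOf_lt_of_mem h

noncomputable instance : DecidableEq SG := Classical.decEq _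

def la : SG → ℝ | mk a _ _ _ => a
def ra : SG → ℝ | mk _ b _ _ => b
def L : SG → List SG | mk _ _ l _ => l
def R : SG → List SG | mk _ _ _ r => r

/-- The list of atom values occurring in atomic followers of a game. -/
def atomList : SG → List ℝ
  | mk a b ls rs =>
    (if ls.isEmpty then [a] else (ls.attach.map (fun x => atomList x.1)).flatten)
    ++ (if rs.isEmpty then [b] else (rs.attach.map (fun x => atomList x.1)).flatten)
decreasing_by all_goals (simp only [SG.mk.sizeOf_spec]; (first | (have := sizeOf_lt_of_mem x.2) | (have := sizeOf_lt_of_mem (by assumption : x ∈ _))); omega)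

/-- The guaranteed condition. -/
def Guaranteed : SG → Prop
  | mk a b ls rs =>
    (∀ x ∈ ls, Guaranteed x) ∧ (∀ x ∈ rs, Guaranteed x) ∧
    (ls = [] → ∀ s ∈ (mk a b ls rs).atomList, a ≤ s) ∧
    (rs = [] → ∀ s ∈ (mk a b ls rs).atomList, s ≤ b)
decreasing_by all_goals (simp only [SG.mk.sizeOf_spec]; (first | (have := sizeOf_lt_of_mem x.2) | (have := sizeOf_lt_of_mem (by assumption : x ∈ _))); omega)

/-- Disjunctive sum. -/
noncomputable def add : SG → SG → SG
  | mk a1 b1 L1 R1, mk a2 b2 L2 R2 =>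
    mk (a1 + a2) (b1 + b2)
      (L1.attach.map (fun x => add x.1 (mk a2 b2 L2 R2))
        ++ L2.attach.map (fun x => add (mk a1 b1 L1 R1) x.1))
      (R1.attach.map (fun x => add x.1 (mk a2 b2 L2 R2))
        ++ R2.attach.map (fun x => add (mk a1 b1 L1 R1) x.1))
termination_by g h => sizeOf g + sizeOf h
decreasing_by all_goals (simp only [SG.mk.sizeOf_spec]; (first | (have := sizeOf_lt_of_mem x.2) | (have := sizeOf_lt_of_mem (by assumption : x ∈ _))); omega)

/-- Left- and Right-stops (as a pair). -/
noncomputable def stops : SG → ℝ × ℝ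
  | mk a b ls rs =>
    (if ls.isEmpty then a else (WithBot.unbotD 0 (ls.attach.map (fun x => (stops x.1).2)).maximum),
     if rs.isEmpty then b else (WithTop.untopD 0 (rs.attach.map (fun x => (stops x.1).1)).minimum))
decreasing_by all_goals (simp only [SG.mk.sizeOf_spec]; (first | (have := sizeOf_lt_of_mem x.2) | (have := sizeOf_lt_of_mem (by assumption : x ∈ _))); omega)

noncomputable def Ls (g : SG) : ℝ := g.stops.1
noncomputable def Rs (g : SG) : ℝ := g.stops.2

/-- The conjugate: interchange Left and Right and negate atoms. -/
noncomputable def conj : SG → SG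
  | mk a b ls rs =>
    mk (-b) (-a) (rs.attach.map (fun x => conj x.1)) (ls.attach.map (fun x => conj x.1))
decreasing_by all_goals (simp only [SG.mk.sizeOf_spec]; (first | (have := sizeOf_lt_of_mem x.2) | (have := sizeOf_lt_of_mem (by assumption : x ∈ _))); omega)

/-- The game ⟨∅^s | ∅^s⟩ of a real number `s`. -/
def num (s : ℝ) : SG := mk s s [] []

/-- The zero game ⟨∅^0 | ∅^0⟩. -/
def zero : SG := num 0

/-- Waiting moves: the image of the Normal-play integer `n`. -/
def wait : ℕ → SG
  | 0 => zero
  | n + 1 => mk 0 0 [wait n] []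

/-- Birthday: the depth of the game tree. -/
def birthday : SG → ℕ
  | mk _ _ ls rs =>
    max (WithBot.unbotD 0 (ls.attach.map (fun x => birthday x.1 + 1)).maximum)
        (WithBot.unbotD 0 (rs.attach.map (fun x => birthday x.1 + 1)).maximum)
decreasing_by all_goals (simp only [SG.mk.sizeOf_spec]; (first | (have := sizeOf_lt_of_mem x.2) | (have := sizeOf_lt_of_mem (by assumption : x ∈ _))); omega)

/-- `Ge G H` is the order `G ≽ H`. -/
def Ge (G H : SG) : Prop :=
  ∀ X : SG, X.Guaranteed → Ls (G.add X) ≥ Ls (H.add X) ∧ Rs (G.add X) ≥ Rs (H.add X)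

/-- Equivalence `G ∼ H`. -/
def Equiv (G H : SG) : Prop := Ge G H ∧ Ge H G

/-- Right's pass-allowed Left-stop `L̲s(G) = min_n Ls(G - n̂)`. -/
noncomputable def lsU (G : SG) : ℝ := ⨅ n : ℕ, Ls (G.add (wait n).conj)

/-- Left's pass-allowed Right-stop `R̄s(G) = max_n Rs(G + n̂)`. -/
noncomputable def rsO (G : SG) : ℝ := ⨆ n : ℕ, Rs (G.add (wait n))

/-- `L̄s(G) = max_n Ls(G + n̂)`. -/
noncomputable def lsO (G : SG) : ℝ := ⨆ n : ℕ, Ls (G.add (wait n))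

/-- `R̲s(G) = min_n Rs(G + n̂)`. -/
noncomputable def rsU (G : SG) : ℝ := ⨅ n : ℕ, Rs (G.add (wait n))

/-- Identity of games: same tree structure (up to reordering of options),
with identical atoms at atomic positions. -/
def Ident : SG → SG → Prop
  | mk a1 b1 L1 R1, mk a2 b2 L2 R2 =>
    (L1 = [] ↔ L2 = []) ∧ (L1 = [] → a1 = a2) ∧
    (R1 = [] ↔ R2 = []) ∧ (R1 = [] → b1 = b2) ∧
    (∀ x ∈ L1, ∃ y : {z // z ∈ L2}, Ident x y.1) ∧
    (∀ y ∈ L2, ∃ x : {z // z ∈ L1}, Ident x.1 y) ∧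
    (∀ x ∈ R1, ∃ y : {z // z ∈ R2}, Ident x y.1) ∧
    (∀ y ∈ R2, ∃ x : {z // z ∈ R1}, Ident x.1 y)
termination_by g h => sizeOf g
decreasing_by all_goals (simp only [SG.mk.sizeOf_spec]; (first | (have := sizeOf_lt_of_mem x.2) | (have := sizeOf_lt_of_mem (by assumption : x ∈ _))); omega)

/-- `Linked H G`: `H` is linked to `G` (by some guaranteed `T`). -/
def Linked (H G : SG) : Prop :=
  ∃ T : SG, T.Guaranteed ∧ Ls (H.add T) < 0 ∧ 0 < Rs (G.add T)

/-- Replace every atom of `G` by `∅^x`. -/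
def subst (v : ℝ) : SG → SG
  | mk _ _ ls rs =>
    mk v v (ls.attach.map (fun x => subst v x.1)) (rs.attach.map (fun x => subst v x.1))
decreasing_by all_goals (simp only [SG.mk.sizeOf_spec]; (first | (have := sizeOf_lt_of_mem x.2) | (have := sizeOf_lt_of_mem (by assumption : x ∈ _))); omega)

/-- The maximum atom value in `G`. -/
noncomputable def maxAtom (G : SG) : ℝ := WithBot.unbotD 0 G.atomList.maximum

/-- The minimum atom value in `G`. -/
noncomputable def minAtom (G : SG) : ℝ := WithTop.untopD 0 G.atomList.minimum


/-! ### Auxiliary lemmas -/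

theorem myInd (P : SG → Prop)
    (h : ∀ a b ls rs, (∀ x ∈ ls, P x) → (∀ x ∈ rs, P x) → P (mk a b ls rs)) :
    ∀ g, P g
  | mk a b ls rs => h a b ls rs (fun x hx => myInd P h x) (fun x hx => myInd P h x)
termination_by g => sizeOf g
decreasing_by all_goals (simp only [SG.mk.sizeOf_spec]; have := sizeOf_lt_of_mem hx; omega)

@[simp] theorem L_mk (a b : ℝ) (ls rs : List SG) : (mk a b ls rs).L = ls := rfl
@[simp] theorem R_mk (a b : ℝ) (ls rs : List SG) : (mk a b ls rs).R = rs := rfl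

theorem add_mk (a b a' b' : ℝ) (ls rs ls' rs' : List SG) :
    (mk a b ls rs).add (mk a' b' ls' rs') =
      mk (a + a') (b + b')
        (ls.map (fun x => x.add (mk a' b' ls' rs')) ++ ls'.map (fun x => (mk a b ls rs).add x))
        (rs.map (fun x => x.add (mk a' b' ls' rs')) ++ rs'.map (fun x => (mk a b ls rs).add x)) := by
  rw [add]
  simp [List.attach_map_val]

theorem Ls_mk (a b : ℝ) (ls rs : List SG) :
    Ls (mk a b ls rs) = if ls.isEmpty then a else (WithBot.unbotD 0 (ls.map Rs).maximum) := by
  rw [Ls, stops]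
  rw [List.attach_map_val (l := ls) (f := fun x => (stops x).2), List.attach_map_val (l := rs) (f := fun x => (stops x).1)]
  simp only [show (fun (x:SG) => (stops x).2) = Rs from rfl, show (fun (x:SG) => (stops x).1) = Ls from rfl]

theorem Rs_mk (a b : ℝ) (ls rs : List SG) :
    Rs (mk a b ls rs) = if rs.isEmpty then b else (WithTop.untopD 0 (rs.map Ls).minimum) := by
  rw [Rs, stops]
  rw [List.attach_map_val (l := ls) (f := fun x => (stops x).2), List.attach_map_val (l := rs) (f := fun x => (stops x).1)]
  simp only [show (fun (x:SG) => (stops x).2) = Rs from rfl, show (fun (x:SG) => (stops x).1) = Ls from rfl]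

theorem atomList_mk (a b : ℝ) (ls rs : List SG) :
    (mk a b ls rs).atomList =
      (if ls.isEmpty then [a] else (ls.map atomList).flatten)
      ++ (if rs.isEmpty then [b] else (rs.map atomList).flatten) := by
  rw [atomList]
  simp only [List.attach_map_val]

theorem Guaranteed_mk (a b : ℝ) (ls rs : List SG) :
    (mk a b ls rs).Guaranteed ↔
      ((∀ x ∈ ls, Guaranteed x) ∧ (∀ x ∈ rs, Guaranteed x) ∧
      (ls = [] → ∀ s ∈ (mk a b ls rs).atomList, a ≤ s) ∧
      (rs = [] → ∀ s ∈ (mk a b ls rs).atomList, s ≤ b)) := by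
  rw [Guaranteed]

/-! ### max/min helpers -/

theorem max_mem' {l : List ℝ} (h : l ≠ []) : WithBot.unbotD 0 l.maximum ∈ l := by
  cases h' : l.maximum with
  | bot => exact absurd (List.maximum_eq_bot.1 h') h
  | coe m => simpa using List.maximum_mem h'

theorem le_max' {l : List ℝ} {a : ℝ} (h : a ∈ l) : a ≤ WithBot.unbotD 0 l.maximum := by
  have h1 := List.le_maximum_of_mem' h
  cases h' : l.maximum with
  | bot => rw [h'] at h1; exact absurd h1 (by simp)
  | coe m => rw [h'] at h1; simpa using h1

theorem min_mem' {l : List ℝ} (h : l ≠ []) : WithTop.untopD 0 l.minimum ∈ l := by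
  cases h' : l.minimum with
  | top => exact absurd (List.minimum_eq_top.1 h') h
  | coe m => simpa using List.minimum_mem h'

theorem min_le' {l : List ℝ} {a : ℝ} (h : a ∈ l) : WithTop.untopD 0 l.minimum ≤ a := by
  have h1 := List.minimum_le_of_mem' h
  cases h' : l.minimum with
  | top => rw [h'] at h1; exact absurd h1 (by simp)
  | coe m => rw [h'] at h1; simpa using h1

theorem max_map_add {l : List ℝ} (h : l ≠ []) (s : ℝ) :
    (WithBot.unbotD 0 (l.map (fun x => x + s)).maximum) = WithBot.unbotD 0 l.maximum + s := by
  have h2 : l.map (fun x => x + s) ≠ [] := by simp [h]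
  apply le_antisymm
  · obtain ⟨a, ha, hae⟩ := List.mem_map.1 (max_mem' h2)
    rw [← hae]
    exact add_le_add_left (le_max' ha) s
  · exact le_max' (List.mem_map_of_mem (f := fun x => x + s) (max_mem' h))

theorem min_map_add {l : List ℝ} (h : l ≠ []) (s : ℝ) :
    (WithTop.untopD 0 (l.map (fun x => x + s)).minimum) = WithTop.untopD 0 l.minimum + s := by
  have h2 : l.map (fun x => x + s) ≠ [] := by simp [h]
  apply le_antisymm
  · exact min_le' (List.mem_map_of_mem (f := fun x => x + s) (min_mem' h))
  · obtain ⟨a, ha, hae⟩ := List.mem_map.1 (min_mem' h2)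
    rw [← hae]
    exact add_le_add_left (min_le' ha) s

theorem le_foldr_max : ∀ (l : List ℝ) (a : ℝ), a ∈ l → a ≤ l.foldr max 0
  | b :: l, a, h => by
    rcases List.mem_cons.1 h with rfl | h
    · exact le_max_left _ _
    · exact le_trans (le_foldr_max l a h) (le_max_right _ _)

/-! ### stop bounds -/

theorem le_Ls_of_mem {A x : SG} (hx : x ∈ A.L) : x.Rs ≤ A.Ls := by
  obtain ⟨a, b, ls, rs⟩ := A
  simp only [L_mk] at hx
  have hne : ls ≠ [] := List.ne_nil_of_mem hx
  rw [Ls_mk, if_neg (by simp [hne])]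
  exact le_max' (List.mem_map_of_mem (f := Rs) hx)

theorem Rs_le_of_mem {A x : SG} (hx : x ∈ A.R) : A.Rs ≤ x.Ls := by
  obtain ⟨a, b, ls, rs⟩ := A
  simp only [R_mk] at hx
  have hne : rs ≠ [] := List.ne_nil_of_mem hx
  rw [Rs_mk, if_neg (by simp [hne])]
  exact min_le' (List.mem_map_of_mem (f := Ls) hx)

theorem Ls_neg {A : SG} (h : A.L ≠ []) (h2 : ∀ x ∈ A.L, x.Rs < 0) : A.Ls < 0 := by
  obtain ⟨a, b, ls, rs⟩ := A
  simp only [L_mk] at h h2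
  rw [Ls_mk, if_neg (by simp [h])]
  obtain ⟨x, hx, hxe⟩ := List.mem_map.1 (max_mem' (show ls.map Rs ≠ [] by simp [h]))
  rw [← hxe]
  exact h2 x hx

theorem Rs_pos {A : SG} (h : A.R ≠ []) (h2 : ∀ x ∈ A.R, 0 < x.Ls) : 0 < A.Rs := by
  obtain ⟨a, b, ls, rs⟩ := A
  simp only [R_mk] at h h2
  rw [Rs_mk, if_neg (by simp [h])]
  obtain ⟨x, hx, hxe⟩ := List.mem_map.1 (min_mem' (show rs.map Ls ≠ [] by simp [h]))
  rw [← hxe]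
  exact h2 x hx

/-! ### numbers and translation -/

theorem guaranteed_num (s : ℝ) : (num s).Guaranteed := by
  rw [num, Guaranteed_mk]
  refine ⟨by simp, by simp, ?_, ?_⟩
  · intro _ t ht
    rw [atomList_mk] at ht
    simp only [List.isEmpty_nil, if_pos, List.mem_append, List.mem_singleton] at ht
    rcases ht with rfl | rfl <;> rfl
  · intro _ t ht
    rw [atomList_mk] at ht
    simp only [List.isEmpty_nil, if_pos, List.mem_append, List.mem_singleton] at ht
    rcases ht with rfl | rfl <;> rfl

theorem add_num_eq (a b : ℝ) (ls rs : List SG) (s : ℝ) :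
    (mk a b ls rs).add (num s) =
      mk (a + s) (b + s) (ls.map (fun z => z.add (num s))) (rs.map (fun z => z.add (num s))) := by
  rw [show num s = mk s s [] [] from rfl, add_mk]
  simp

theorem atomList_add_num (s : ℝ) :
    ∀ A : SG, (A.add (num s)).atomList = A.atomList.map (fun x => x + s) := by
  refine myInd _ (fun a b ls rs ihl ihr => ?_)
  rw [add_num_eq, atomList_mk, atomList_mk, List.map_append]
  congr 1
  · by_cases hl : ls = []
    · subst hl; simp
    · rw [if_neg (by simp [hl]), if_neg (by simp [hl]), List.map_flatten, List.map_map,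
        List.map_map]
      congr 1
      exact List.map_congr_left (fun x hx => ihl x hx)
  · by_cases hr : rs = []
    · subst hr; simp
    · rw [if_neg (by simp [hr]), if_neg (by simp [hr]), List.map_flatten, List.map_map,
        List.map_map]
      congr 1
      exact List.map_congr_left (fun x hx => ihr x hx)

theorem guaranteed_add_num (s : ℝ) :
    ∀ A : SG, A.Guaranteed → (A.add (num s)).Guaranteed := by
  refine myInd _ (fun a b ls rs ihl ihr hg => ?_)
  rw [Guaranteed_mk] at hg
  have hat := atomList_add_num s (mk a b ls rs)
  rw [add_num_eq] at hat ⊢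
  rw [Guaranteed_mk]
  refine ⟨?_, ?_, ?_, ?_⟩
  · intro x hx
    obtain ⟨y, hy, rfl⟩ := List.mem_map.1 hx
    exact ihl y hy (hg.1 y hy)
  · intro x hx
    obtain ⟨y, hy, rfl⟩ := List.mem_map.1 hx
    exact ihr y hy (hg.2.1 y hy)
  · intro hnil t ht
    rw [List.map_eq_nil_iff] at hnil
    rw [hat] at ht
    obtain ⟨u, hu, rfl⟩ := List.mem_map.1 ht
    have := hg.2.2.1 hnil u hu
    linarith
  · intro hnil t ht
    rw [List.map_eq_nil_iff] at hnil
    rw [hat] at ht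
    obtain ⟨u, hu, rfl⟩ := List.mem_map.1 ht
    have := hg.2.2.2 hnil u hu
    linarith

theorem add_add_num (s : ℝ) : ∀ A B : SG, A.add (B.add (num s)) = (A.add B).add (num s)
  | mk a b ls rs, mk a' b' ls' rs' => by
    rw [add_num_eq a' b' ls' rs' s, add_mk, add_mk, add_num_eq]
    simp only [mk.injEq]
    refine ⟨by ring, by ring, ?_, ?_⟩
    · simp only [List.map_append, List.map_map]
      congr 1
      · refine List.map_congr_left (fun x hx => ?_)
        simp only [Function.comp_apply]
        rw [← add_num_eq a' b' ls' rs' s]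
        exact add_add_num s x (mk a' b' ls' rs')
      · refine List.map_congr_left (fun y hy => ?_)
        exact add_add_num s (mk a b ls rs) y
    · simp only [List.map_append, List.map_map]
      congr 1
      · refine List.map_congr_left (fun x hx => ?_)
        simp only [Function.comp_apply]
        rw [← add_num_eq a' b' ls' rs' s]
        exact add_add_num s x (mk a' b' ls' rs')
      · refine List.map_congr_left (fun y hy => ?_)
        exact add_add_num s (mk a b ls rs) y
termination_by A B => sizeOf A + sizeOf B
decreasing_by all_goals (simp only [SG.mk.sizeOf_spec]; (first | (have := sizeOf_lt_of_mem hx) | (have := sizeOf_lt_of_mem hy)); omega)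

theorem stops_add_num (s : ℝ) :
    ∀ A : SG, Ls (A.add (num s)) = Ls A + s ∧ Rs (A.add (num s)) = Rs A + s := by
  refine myInd _ (fun a b ls rs ihl ihr => ?_)
  rw [add_num_eq]
  constructor
  · rw [Ls_mk, Ls_mk]
    by_cases h : ls = []
    · subst h; simp
    · rw [if_neg (by simp [h]), if_neg (by simp [h]), List.map_map]
      have he : ls.map (Rs ∘ fun z => z.add (num s)) = (ls.map Rs).map (fun x => x + s) := by
        rw [List.map_map]
        exact List.map_congr_left (fun x hx => (ihl x hx).2)
      rw [he, max_map_add (by simp [h]) s]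
  · rw [Rs_mk, Rs_mk]
    by_cases h : rs = []
    · subst h; simp
    · rw [if_neg (by simp [h]), if_neg (by simp [h]), List.map_map]
      have he : rs.map (Ls ∘ fun z => z.add (num s)) = (rs.map Ls).map (fun x => x + s) := by
        rw [List.map_map]
        exact List.map_congr_left (fun x hx => (ihr x hx).1)
      rw [he, min_map_add (by simp [h]) s]

theorem add_L (A B : SG) :
    (A.add B).L = A.L.map (fun x => x.add B) ++ B.L.map (fun y => A.add y) := by
  obtain ⟨a, b, ls, rs⟩ := A
  obtain ⟨a', b', ls', rs'⟩ := B
  rw [add_mk]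
  rfl

theorem add_R (A B : SG) :
    (A.add B).R = A.R.map (fun x => x.add B) ++ B.R.map (fun y => A.add y) := by
  obtain ⟨a, b, ls, rs⟩ := A
  obtain ⟨a', b', ls', rs'⟩ := B
  rw [add_mk]
  rfl

theorem guaranteed_mk' {a b : ℝ} {ls rs : List SG} (h1 : ls ≠ []) (h2 : rs ≠ [])
    (hl : ∀ x ∈ ls, x.Guaranteed) (hr : ∀ x ∈ rs, x.Guaranteed) :
    (mk a b ls rs).Guaranteed := by
  rw [Guaranteed_mk]
  exact ⟨hl, hr, fun h => absurd h h1, fun h => absurd h h2⟩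

/-! ### the two main cases -/

theorem caseL (G H X : SG) (hXg : X.Guaranteed) (hlt : Ls (G.add X) < Ls (H.add X)) :
    (∃ X : SG, X.Guaranteed ∧ Ls (G.add X) < 0 ∧ 0 < Ls (H.add X)) ∧
    (∃ Y : SG, Y.Guaranteed ∧ Rs (G.add Y) < 0 ∧ 0 < Rs (H.add Y)) := by
  set s := -(Ls (G.add X) + Ls (H.add X)) / 2 with hs
  set X' := X.add (num s) with hX'
  have hX'g : X'.Guaranteed := guaranteed_add_num s X hXg
  have hG1 : Ls (G.add X') < 0 := by
    rw [hX', add_add_num, (stops_add_num s (G.add X)).1]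
    rw [hs]; linarith
  have hH1 : 0 < Ls (H.add X') := by
    rw [hX', add_add_num, (stops_add_num s (H.add X)).1]
    rw [hs]; linarith
  refine ⟨⟨X', hX'g, hG1, hH1⟩, ?_⟩
  set t := 1 + (H.R.map (fun x => -(Rs x))).foldr max 0 with ht
  set Y := mk 0 0 [num t] [X'] with hY
  have hYg : Y.Guaranteed := by
    refine guaranteed_mk' (by simp) (by simp) ?_ ?_
    · intro x hx
      rw [List.mem_singleton] at hx
      subst hx
      exact guaranteed_num t
    · intro x hx
      rw [List.mem_singleton] at hx
      subst hx
      exact hX'g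
  have hYR : Y.R = [X'] := rfl
  have hYL : Y.L = [num t] := rfl
  refine ⟨Y, hYg, ?_, ?_⟩
  · have hmem : G.add X' ∈ (G.add Y).R := by
      rw [add_R, hYR]
      exact List.mem_append_right _ (by simp)
    exact lt_of_le_of_lt (Rs_le_of_mem hmem) hG1
  · apply Rs_pos
    · rw [add_R, hYR]
      simp
    · intro z hz
      rw [add_R, hYR] at hz
      rcases List.mem_append.1 hz with hz | hz
      · obtain ⟨hr, hhr, rfl⟩ := List.mem_map.1 hz
        have hm2 : hr.add (num t) ∈ (hr.add Y).L := by
          rw [add_L, hYL]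
          exact List.mem_append_right _ (by simp)
        have h1 : Rs (hr.add (num t)) ≤ Ls (hr.add Y) := le_Ls_of_mem hm2
        have h3 : Rs (hr.add (num t)) = Rs hr + t := (stops_add_num t hr).2
        have h4 : -(Rs hr) ≤ (H.R.map (fun x => -(Rs x))).foldr max 0 :=
          le_foldr_max _ _ (List.mem_map_of_mem hhr)
        rw [ht] at h3
        linarith
      · rw [List.map_singleton, List.mem_singleton] at hz
        subst hz
        exact hH1

theorem caseR (G H X : SG) (hXg : X.Guaranteed) (hlt : Rs (G.add X) < Rs (H.add X)) :
    (∃ X : SG, X.Guaranteed ∧ Ls (G.add X) < 0 ∧ 0 < Ls (H.add X)) ∧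
    (∃ Y : SG, Y.Guaranteed ∧ Rs (G.add Y) < 0 ∧ 0 < Rs (H.add Y)) := by
  set s := -(Rs (G.add X) + Rs (H.add X)) / 2 with hs
  set Y' := X.add (num s) with hY'
  have hY'g : Y'.Guaranteed := guaranteed_add_num s X hXg
  have hG1 : Rs (G.add Y') < 0 := by
    rw [hY', add_add_num, (stops_add_num s (G.add X)).2]
    rw [hs]; linarith
  have hH1 : 0 < Rs (H.add Y') := by
    rw [hY', add_add_num, (stops_add_num s (H.add X)).2]
    rw [hs]; linarith
  refine ⟨?_, ⟨Y', hY'g, hG1, hH1⟩⟩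
  set t := -(1 + (G.L.map (fun x => Ls x)).foldr max 0) with ht
  set Xp := mk 0 0 [Y'] [num t] with hXp
  have hXpg : Xp.Guaranteed := by
    refine guaranteed_mk' (by simp) (by simp) ?_ ?_
    · intro x hx
      rw [List.mem_singleton] at hx
      subst hx
      exact hY'g
    · intro x hx
      rw [List.mem_singleton] at hx
      subst hx
      exact guaranteed_num t
  have hXpR : Xp.R = [num t] := rfl
  have hXpL : Xp.L = [Y'] := rfl
  refine ⟨Xp, hXpg, ?_, ?_⟩
  · apply Ls_neg
    · rw [add_L, hXpL]
      simp
    · intro z hz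
      rw [add_L, hXpL] at hz
      rcases List.mem_append.1 hz with hz | hz
      · obtain ⟨gl, hgl, rfl⟩ := List.mem_map.1 hz
        have hm2 : gl.add (num t) ∈ (gl.add Xp).R := by
          rw [add_R, hXpR]
          exact List.mem_append_right _ (by simp)
        have h1 : Rs (gl.add Xp) ≤ Ls (gl.add (num t)) := Rs_le_of_mem hm2
        have h3 : Ls (gl.add (num t)) = Ls gl + t := (stops_add_num t gl).1
        have h4 : Ls gl ≤ (G.L.map (fun x => Ls x)).foldr max 0 :=
          le_foldr_max _ _ (List.mem_map_of_mem hgl)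
        rw [ht] at h3
        linarith
      · rw [List.map_singleton, List.mem_singleton] at hz
        subst hz
        exact hG1
  · have hmem : H.add Y' ∈ (H.add Xp).L := by
      rw [add_L, hXpL]
      exact List.mem_append_right _ (by simp)
    exact lt_of_lt_of_le hH1 (le_Ls_of_mem hmem)


/-- If `G ⋡ H` then there are guaranteed `X`, `Y` with
`Ls(G+X) < 0 < Ls(H+X)` and `Rs(G+Y) < 0 < Rs(H+Y)`. -/
theorem not_ge_separation (G H : SG) (hG : G.Guaranteed) (hH : H.Guaranteed)
    (h : ¬ G.Ge H) :
    (∃ X : SG, X.Guaranteed ∧ Ls (G.add X) < 0 ∧ 0 < Ls (H.add X)) ∧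
    (∃ Y : SG, Y.Guaranteed ∧ Rs (G.add Y) < 0 ∧ 0 < Rs (H.add Y)) := by
  simp only [Ge] at h
  push_neg at h
  obtain ⟨X, hXg, hor⟩ := h
  by_cases hge : Ls (G.add X) ≥ Ls (H.add X)
  · exact caseR G H X hXg (hor hge)
  · exact caseL G H X hXg (lt_of_not_ge hge)

end SG
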